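/- In a geodetic graph, if u_0, u_1, ..., u_n and u_0, u'_1, ..., u'_n are two geodesics of the same length n starting at the same vertex u_0, with u_1 ≠ u'_1, and the endpoints u_n and u'_n are adjacent, then the closed path u_0, u_1, ..., u_n, u'_n, ..., u'_1, u_0 is an isometrically embedded circuit (of length 2n+1). -/

import Mathlib

/-- A graph is geodetic if between any two vertices there is a unique shortest walk
(equivalently, a unique shortest path). -/
def IsGeodetic {V : Type*} (G : SimpleGraph V) : Prop :=
  ∀ u v : V, ∃! p : G.Walk u v, ∀ q : G.Walk u v, p.length ≤ q.length

/-- `c : ZMod n → V` is an embedded circuit of length `n`: the vertices are distinct and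
cyclically consecutive vertices are adjacent. -/
def IsEmbCircuit {V : Type*} (G : SimpleGraph V) (n : ℕ) (c : ZMod n → V) : Prop :=
  2 ≤ n ∧ Function.Injective c ∧ ∀ i : ZMod n, G.Adj (c i) (c (i + 1))

/-- An embedded circuit is isometrically embedded if the graph distance between any two of its
vertices equals the cyclic distance `min {j-i, n+i-j}` along the circuit. -/
def IsIEC {V : Type*} (G : SimpleGraph V) (n : ℕ) (c : ZMod n → V) : Prop :=
  IsEmbCircuit G n c ∧ ∀ i j : ZMod n, G.dist (c i) (c j) = min (j - i).val (i - j).val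


namespace StmtAux
open SimpleGraph

variable {V : Type*} {G : SimpleGraph V}

/-- Build a walk from a chain of adjacent vertices. -/
def chain (G : SimpleGraph V) : (m : ℕ) → (f : ℕ → V) → (∀ k < m, G.Adj (f k) (f (k+1))) →
    G.Walk (f 0) (f m)
  | 0, _, _ => SimpleGraph.Walk.nil
  | (m+1), f, h =>
      SimpleGraph.Walk.cons (h 0 (by omega))
        (chain G m (fun k => f (k+1)) (fun k _ => h (k+1) (by omega)))

theorem length_chain (G : SimpleGraph V) : ∀ (m : ℕ) (f : ℕ → V)
    (h : ∀ k < m, G.Adj (f k) (f (k+1))), (chain G m f h).length = m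
  | 0, _, _ => rfl
  | (m+1), f, h => by
      simp only [chain, SimpleGraph.Walk.length_cons, length_chain G m]

theorem getVert_chain (G : SimpleGraph V) : ∀ (m : ℕ) (f : ℕ → V)
    (h : ∀ k < m, G.Adj (f k) (f (k+1))) (i : ℕ), i ≤ m → (chain G m f h).getVert i = f i
  | 0, f, _, i, hi => by
      interval_cases i
      exact SimpleGraph.Walk.getVert_zero _
  | (m+1), f, h, 0, _ => SimpleGraph.Walk.getVert_zero _
  | (m+1), f, h, (i+1), hi => by
      rw [chain, SimpleGraph.Walk.getVert_cons_succ]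
      exact getVert_chain G m _ _ i (by omega)

theorem geodetic_unique (hG : IsGeodetic G) {u v : V} (W W' : G.Walk u v)
    (hW : W.length = G.dist u v) (hW' : W'.length = G.dist u v) : W = W' := by
  obtain ⟨p₀, _, huniq⟩ := hG u v
  rw [huniq W (fun r => hW ▸ SimpleGraph.dist_le r),
      huniq W' (fun r => hW' ▸ SimpleGraph.dist_le r)]

theorem length_eq_dist_of_min {u v : V} (W : G.Walk u v)
    (h : ∀ r : G.Walk u v, W.length ≤ r.length) : W.length = G.dist u v := by
  obtain ⟨r, hr⟩ := SimpleGraph.Reachable.exists_walk_length_eq_dist ⟨W⟩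
  exact le_antisymm (hr ▸ h r) (SimpleGraph.dist_le W)

theorem dist_triangle' {u v w : V} (p : G.Walk u v) (q : G.Walk v w) :
    G.dist u w ≤ G.dist u v + G.dist v w := by
  obtain ⟨p', hp'⟩ := SimpleGraph.Reachable.exists_walk_length_eq_dist (⟨p⟩ : G.Reachable u v)
  obtain ⟨q', hq'⟩ := SimpleGraph.Reachable.exists_walk_length_eq_dist (⟨q⟩ : G.Reachable v w)
  calc G.dist u w ≤ (p'.append q').length := SimpleGraph.dist_le _
  _ = _ := by rw [SimpleGraph.Walk.length_append, hp', hq']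

end StmtAux

namespace StmtAux
open SimpleGraph

variable {V : Type*} {G : SimpleGraph V}

/-- A configuration: two geodesics of length `n` from a common basepoint, diverging
immediately, with adjacent endpoints. -/
structure Cfg (G : SimpleGraph V) (n : ℕ) (f g : ℕ → V) : Prop where
  hfg0 : f 0 = g 0
  adjf : ∀ k < n, G.Adj (f k) (f (k+1))
  adjg : ∀ k < n, G.Adj (g k) (g (k+1))
  distf : G.dist (f 0) (f n) = n
  distg : G.dist (g 0) (g n) = n
  hne1 : f 1 ≠ g 1
  hadj : G.Adj (f n) (g n)

namespace Cfg

variable {n : ℕ} {f g : ℕ → V}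

theorem symm (C : Cfg G n f g) : Cfg G n g f :=
  ⟨C.hfg0.symm, C.adjg, C.adjf, C.distg, C.distf, C.hne1.symm, C.hadj.symm⟩

/-- The walk along `f` from `f i` to `f j`. -/
def seg (C : Cfg G n f g) (i j : ℕ) (hij : i ≤ j) (hj : j ≤ n) : G.Walk (f i) (f j) :=
  (chain G (j - i) (fun k => f (i + k)) (fun k hk => by
      show G.Adj (f (i + k)) (f (i + (k+1)))
      have h1 : i + (k+1) = (i+k) + 1 := by omega
      rw [h1]
      exact C.adjf (i+k) (by omega))).copy (by norm_num) (congrArg f (by omega))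

@[simp] theorem length_seg (C : Cfg G n f g) (i j : ℕ) (hij : i ≤ j) (hj : j ≤ n) :
    (C.seg i j hij hj).length = j - i := by
  simp [seg, length_chain]

theorem getVert_seg (C : Cfg G n f g) (i j : ℕ) (hij : i ≤ j) (hj : j ≤ n)
    (t : ℕ) (ht : t ≤ j - i) : (C.seg i j hij hj).getVert t = f (i + t) := by
  simp only [seg, SimpleGraph.Walk.getVert_copy]
  exact getVert_chain G _ _ _ t ht

theorem df (C : Cfg G n f g) (i : ℕ) (hi : i ≤ n) : G.dist (f 0) (f i) = i := by
  have h1 : G.dist (f 0) (f i) ≤ i := by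
    have := SimpleGraph.dist_le (C.seg 0 i (by omega) hi)
    simpa using this
  have h2 : G.dist (f i) (f n) ≤ n - i := by
    have := SimpleGraph.dist_le (C.seg i n hi le_rfl)
    simpa using this
  have h3 := dist_triangle' (C.seg 0 i (by omega) hi) (C.seg i n hi le_rfl)
  have h4 := C.distf
  omega

theorem dg (C : Cfg G n f g) (j : ℕ) (hj : j ≤ n) : G.dist (g 0) (g j) = j :=
  C.symm.df j hj

theorem ne_fg (hG : IsGeodetic G) (C : Cfg G n f g) (i j : ℕ)
    (hi1 : 1 ≤ i) (hi : i ≤ n) (hj : j ≤ n) : f i ≠ g j := by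
  intro h
  have d1 := C.df i hi
  have d2 := C.dg j hj
  have d2' : G.dist (f 0) (f i) = j := by rw [C.hfg0, h]; exact d2
  have hij : i = j := by rw [d1] at d2'; omega
  subst hij
  have hu := geodetic_unique hG (C.seg 0 i (by omega) hi)
      ((C.symm.seg 0 i (by omega) hj).copy C.hfg0.symm h.symm) (by simp [d1]) (by simp [d1])
  have e1 := C.getVert_seg 0 i (by omega) hi 1 (by omega)
  have e2 := C.symm.getVert_seg 0 i (by omega) hj 1 (by omega)
  apply C.hne1
  have e3 := congrArg (fun W : G.Walk (f 0) (f i) => W.getVert 1) hu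
  simp only [SimpleGraph.Walk.getVert_copy] at e3
  rw [e1, e2] at e3
  simpa using e3

end Cfg
end StmtAux

namespace StmtAux
namespace Cfg
open SimpleGraph

variable {V : Type*} {G : SimpleGraph V} {n : ℕ} {f g : ℕ → V}

/-- The walk from `f i` over the top edge to `g n`. -/
def top (C : Cfg G n f g) (i : ℕ) (hi : i ≤ n) : G.Walk (f i) (g n) :=
  (chain G (n+1-i) (fun k => if i + k ≤ n then f (i+k) else g n) (fun k hk => by
      show G.Adj (if i + k ≤ n then f (i+k) else g n) (if i + (k+1) ≤ n then f (i+(k+1)) else g n)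
      rw [if_pos (by omega : i + k ≤ n)]
      by_cases h1 : i + (k+1) ≤ n
      · rw [if_pos h1, show i + (k+1) = (i+k)+1 from by omega]
        exact C.adjf (i+k) (by omega)
      · rw [if_neg h1, show i + k = n from by omega]
        exact C.hadj)).copy (by rw [show i + 0 = i from rfl, if_pos hi]) (by rw [if_neg (by omega)])

@[simp] theorem length_top (C : Cfg G n f g) (i : ℕ) (hi : i ≤ n) :
    (C.top i hi).length = n + 1 - i := by
  simp [top, length_chain]

theorem getVert_top (C : Cfg G n f g) (i : ℕ) (hi : i ≤ n) (t : ℕ) (ht : t ≤ n + 1 - i) :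
    (C.top i hi).getVert t = if i + t ≤ n then f (i+t) else g n := by
  simp only [top, SimpleGraph.Walk.getVert_copy]
  exact getVert_chain G _ _ _ t ht

theorem dfg (C : Cfg G n f g) : G.dist (f 0) (g n) = n := by
  rw [C.hfg0]; exact C.distg

/-- The full walk from `f 0` to `g n` along `g`. -/
def gfull (C : Cfg G n f g) : G.Walk (f 0) (g n) :=
  (C.symm.seg 0 n (Nat.zero_le n) le_rfl).copy C.hfg0.symm rfl

@[simp] theorem length_gfull (C : Cfg G n f g) : C.gfull.length = n := by
  simp [gfull]

theorem getVert_gfull (C : Cfg G n f g) (t : ℕ) (ht : t ≤ n) : C.gfull.getVert t = g t := by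
  simp only [gfull, SimpleGraph.Walk.getVert_copy]
  have := C.symm.getVert_seg 0 n (Nat.zero_le n) le_rfl t (by omega)
  simpa using this

/-- A walk from `f 0` to `g n` through `f i`, given a walk `r` from `f i` to `g n` of length
`n - i`. -/
def mid (C : Cfg G n f g) (i : ℕ) (hin : i < n) (r : G.Walk (f i) (g n))
    (hr : r.length = n - i) : G.Walk (f 0) (g n) :=
  (chain G n (fun k => if k ≤ i then f k else r.getVert (k - i)) (fun k hk => by
    show G.Adj (if k ≤ i then f k else r.getVert (k-i))
      (if k + 1 ≤ i then f (k+1) else r.getVert (k+1-i))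
    by_cases h1 : k + 1 ≤ i
    · rw [if_pos (by omega), if_pos h1]
      exact C.adjf k (by omega)
    · rw [if_neg h1]
      by_cases h2 : k ≤ i
      · rw [if_pos h2, show k = i from by omega]
        have h0 : 0 < r.length := by omega
        have ha := r.adj_getVert_succ h0
        rw [SimpleGraph.Walk.getVert_zero] at ha
        simpa using ha
      · rw [if_neg h2, show k + 1 - i = (k - i) + 1 from by omega]
        exact r.adj_getVert_succ (by omega))).copy
    (by rw [if_pos (Nat.zero_le i)])
    (by rw [if_neg (by omega), show n - i = r.length from by omega,
           SimpleGraph.Walk.getVert_length])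

@[simp] theorem length_mid (C : Cfg G n f g) (i : ℕ) (hin : i < n) (r : G.Walk (f i) (g n))
    (hr : r.length = n - i) : (C.mid i hin r hr).length = n := by
  rw [mid, SimpleGraph.Walk.length_copy, length_chain]

theorem getVert_mid (C : Cfg G n f g) (i : ℕ) (hin : i < n) (r : G.Walk (f i) (g n))
    (hr : r.length = n - i) (t : ℕ) (ht : t ≤ n) :
    (C.mid i hin r hr).getVert t = if t ≤ i then f t else r.getVert (t - i) := by
  simp only [mid, SimpleGraph.Walk.getVert_copy]
  exact getVert_chain G _ _ _ t ht

theorem dtop (hG : IsGeodetic G) (C : Cfg G n f g) (hn : 1 ≤ n) (i : ℕ)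
    (hi1 : 1 ≤ i) (hi : i ≤ n) : G.dist (f i) (g n) = n + 1 - i := by
  have hub : G.dist (f i) (g n) ≤ n + 1 - i := by
    have := SimpleGraph.dist_le (C.top i hi)
    simpa using this
  have hlb : n - i ≤ G.dist (f i) (g n) := by
    have h1 := dist_triangle' (C.seg 0 i (by omega) hi) (C.top i hi)
    have h2 : G.dist (f 0) (f i) ≤ i := by
      have := SimpleGraph.dist_le (C.seg 0 i (by omega) hi); simpa using this
    have h3 := C.dfg
    omega
  have hne : G.dist (f i) (g n) ≠ n - i := by
    intro hd
    obtain ⟨r, hr⟩ := SimpleGraph.Reachable.exists_walk_length_eq_dist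
      (⟨C.top i hi⟩ : G.Reachable (f i) (g n))
    rw [hd] at hr
    by_cases hin : i = n
    · subst hin
      have : f i = g i := SimpleGraph.Walk.eq_of_length_eq_zero (p := r) (by omega)
      exact C.hadj.ne this
    · have hin' : i < n := by omega
      have hWlen : (C.mid i hin' r hr).length = G.dist (f 0) (g n) := by
        rw [C.dfg]; simp
      have hWglen : C.gfull.length = G.dist (f 0) (g n) := by
        rw [C.dfg]; simp
      have huq := geodetic_unique hG (C.mid i hin' r hr) C.gfull hWlen hWglen
      have e1 : (C.mid i hin' r hr).getVert 1 = f 1 := by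
        rw [C.getVert_mid i hin' r hr 1 (by omega), if_pos hi1]
      have e2 := C.getVert_gfull 1 hn
      exact C.hne1 (by rw [← e1, huq, e2])
  omega

theorem getVert_eq_top (hG : IsGeodetic G) (C : Cfg G n f g) (hn : 1 ≤ n) (i : ℕ)
    (hi1 : 1 ≤ i) (hi : i ≤ n) (W : G.Walk (f i) (g n)) (hW : W.length = n + 1 - i)
    (t : ℕ) (ht : t ≤ n + 1 - i) : W.getVert t = if i + t ≤ n then f (i+t) else g n := by
  have hd := C.dtop hG hn i hi1 hi
  have huq := geodetic_unique hG W (C.top i hi) (by rw [hW, hd]) (by simp [hd])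
  rw [huq]
  exact C.getVert_top i hi t ht

end Cfg
end StmtAux

namespace StmtAux
namespace Cfg
open SimpleGraph

variable {V : Type*} {G : SimpleGraph V} {n : ℕ} {f g : ℕ → V}

theorem adj_rotg (C : Cfg G n f g) (hn : 1 ≤ n) :
    ∀ k < n, G.Adj ((fun j => if j = 0 then f 1 else g (j-1)) k)
      ((fun j => if j = 0 then f 1 else g (j-1)) (k+1)) := by
  intro k hk
  show G.Adj (if k = 0 then f 1 else g (k-1)) (if k+1 = 0 then f 1 else g (k+1-1))
  rw [if_neg (Nat.succ_ne_zero k), Nat.add_sub_cancel]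
  by_cases h0 : k = 0
  · subst h0
    rw [if_pos rfl, ← C.hfg0]
    exact (C.adjf 0 hn).symm
  · rw [if_neg h0]
    have := C.adjg (k-1) (by omega)
    rwa [show k - 1 + 1 = k from by omega] at this

/-- The walk from `f 1` through `f 0 = g 0` and along `g` to `g (n-1)`. -/
def rotgWalk (C : Cfg G n f g) (hn : 1 ≤ n) : G.Walk (f 1) (g (n-1)) :=
  (chain G n (fun j => if j = 0 then f 1 else g (j-1)) (C.adj_rotg hn)).copy
    (if_pos rfl) (if_neg (by omega))

@[simp] theorem length_rotgWalk (C : Cfg G n f g) (hn : 1 ≤ n) :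
    (C.rotgWalk hn).length = n := by simp [rotgWalk, length_chain]

/-- Extension of a walk `f 1 → g (n-1)` of length `n-1` by the last edge of `g`. -/
def ext (C : Cfg G n f g) (hn : 1 ≤ n) (r : G.Walk (f 1) (g (n-1)))
    (hr : r.length = n - 1) : G.Walk (f 1) (g n) :=
  (chain G n (fun k => if k ≤ n-1 then r.getVert k else g n) (fun k hk => by
    show G.Adj (if k ≤ n-1 then r.getVert k else g n)
      (if k+1 ≤ n-1 then r.getVert (k+1) else g n)
    by_cases h1 : k + 1 ≤ n - 1
    · rw [if_pos (by omega), if_pos h1]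
      exact r.adj_getVert_succ (by omega)
    · rw [if_pos (by omega : k ≤ n - 1), if_neg h1, show k = n - 1 from by omega]
      have hgl : r.getVert (n-1) = g (n-1) := by
        have h := SimpleGraph.Walk.getVert_length r
        rwa [hr] at h
      rw [hgl]
      have := C.adjg (n-1) (by omega)
      rwa [show n - 1 + 1 = n from by omega] at this)).copy
    (by rw [if_pos (Nat.zero_le _), SimpleGraph.Walk.getVert_zero])
    (by rw [if_neg (by omega)])

@[simp] theorem length_ext (C : Cfg G n f g) (hn : 1 ≤ n) (r : G.Walk (f 1) (g (n-1)))
    (hr : r.length = n - 1) : (C.ext hn r hr).length = n := by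
  rw [ext, SimpleGraph.Walk.length_copy, length_chain]

theorem getVert_ext (C : Cfg G n f g) (hn : 1 ≤ n) (r : G.Walk (f 1) (g (n-1)))
    (hr : r.length = n - 1) (t : ℕ) (ht : t ≤ n) :
    (C.ext hn r hr).getVert t = if t ≤ n-1 then r.getVert t else g n := by
  simp only [ext, SimpleGraph.Walk.getVert_copy]
  exact getVert_chain G _ _ _ t ht

theorem dgrot (hG : IsGeodetic G) (C : Cfg G n f g) (hn : 1 ≤ n) :
    G.dist (f 1) (g (n-1)) = n := by
  have hub : G.dist (f 1) (g (n-1)) ≤ n := by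
    have := SimpleGraph.dist_le (C.rotgWalk hn); simpa using this
  have h1 := C.dtop hG hn 1 le_rfl hn
  have hadjlast : G.Adj (g (n-1)) (g n) := by
    have := C.adjg (n-1) (by omega)
    rwa [show n - 1 + 1 = n from by omega] at this
  have hlb : n - 1 ≤ G.dist (f 1) (g (n-1)) := by
    have h2 := dist_triangle' (C.rotgWalk hn) (SimpleGraph.Walk.cons hadjlast SimpleGraph.Walk.nil)
    have h3 : G.dist (g (n-1)) (g n) ≤ 1 := by
      have := SimpleGraph.dist_le (SimpleGraph.Walk.cons hadjlast SimpleGraph.Walk.nil)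
      simpa using this
    omega
  have hne : G.dist (f 1) (g (n-1)) ≠ n - 1 := by
    intro hd
    obtain ⟨r, hr⟩ := SimpleGraph.Reachable.exists_walk_length_eq_dist
      (⟨C.rotgWalk hn⟩ : G.Reachable (f 1) (g (n-1)))
    rw [hd] at hr
    have e1 := C.getVert_eq_top hG hn 1 le_rfl hn (C.ext hn r hr)
      (by simp) (n-1) (by omega)
    rw [if_pos (by omega), show 1 + (n-1) = n from by omega] at e1
    have e2 := C.getVert_ext hn r hr (n-1) (by omega)
    have hgl : r.getVert (n-1) = g (n-1) := by
      have h := SimpleGraph.Walk.getVert_length r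
      rwa [hr] at h
    rw [if_pos le_rfl, hgl] at e2
    exact C.ne_fg hG n (n-1) hn le_rfl (by omega) (by rw [← e1, e2])
  omega

theorem rot (hG : IsGeodetic G) (C : Cfg G n f g) (hn : 1 ≤ n) :
    Cfg G n (fun i => if i < n then f (i+1) else g n)
      (fun j => if j = 0 then f 1 else g (j-1)) := by
  refine ⟨?_, ?_, C.adj_rotg hn, ?_, ?_, ?_, ?_⟩
  · show (if 0 < n then f 1 else g n) = (if (0:ℕ) = 0 then f 1 else g (0-1))
    rw [if_pos (by omega : 0 < n), if_pos rfl]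
  · intro k hk
    show G.Adj (if k < n then f (k+1) else g n) (if k+1 < n then f (k+1+1) else g n)
    rw [if_pos hk]
    by_cases h1 : k + 1 < n
    · rw [if_pos h1]
      exact C.adjf (k+1) h1
    · rw [if_neg h1, show k + 1 = n from by omega]
      exact C.hadj
  · show G.dist (if 0 < n then f 1 else g n) (if n < n then f (n+1) else g n) = n
    rw [if_pos (by omega : 0 < n), if_neg (lt_irrefl n)]
    have := C.dtop hG hn 1 le_rfl hn
    simpa using this
  · show G.dist (if (0:ℕ) = 0 then f 1 else g (0-1)) (if n = 0 then f 1 else g (n-1)) = n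
    rw [if_pos rfl, if_neg (by omega : ¬ n = 0)]
    exact C.dgrot hG hn
  · show (if 1 < n then f 2 else g n) ≠ (if (1:ℕ) = 0 then f 1 else g (1-1))
    rw [if_neg one_ne_zero, show (1:ℕ) - 1 = 0 from rfl]
    by_cases h2 : 1 < n
    · rw [if_pos h2]
      intro h
      have d := C.df 2 h2
      rw [h, ← C.hfg0] at d
      simp [SimpleGraph.dist_self] at d
    · rw [if_neg h2]
      intro h
      have hn1 : n = 1 := by omega
      rw [hn1] at h
      have d := C.dg 1 (by omega)
      rw [h] at d
      simp [SimpleGraph.dist_self] at d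
  · show G.Adj (if n < n then f (n+1) else g n) (if n = 0 then f 1 else g (n-1))
    rw [if_neg (lt_irrefl n), if_neg (by omega : ¬ n = 0)]
    have := C.adjg (n-1) (by omega)
    rw [show n - 1 + 1 = n from by omega] at this
    exact this.symm

end Cfg
end StmtAux

namespace StmtAux
open SimpleGraph

variable {V : Type*} {G : SimpleGraph V} {n : ℕ} {f g : ℕ → V}

theorem Cfg.congr {f' g' : ℕ → V} (C : Cfg G n f g) (hn : 1 ≤ n)
    (hf : ∀ i ≤ n, f i = f' i) (hg : ∀ j ≤ n, g j = g' j) : Cfg G n f' g' := by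
  refine ⟨?_, ?_, ?_, ?_, ?_, ?_, ?_⟩
  · rw [← hf 0 (by omega), ← hg 0 (by omega)]; exact C.hfg0
  · intro k hk; rw [← hf k (by omega), ← hf (k+1) (by omega)]; exact C.adjf k hk
  · intro k hk; rw [← hg k (by omega), ← hg (k+1) (by omega)]; exact C.adjg k hk
  · rw [← hf 0 (by omega), ← hf n le_rfl]; exact C.distf
  · rw [← hg 0 (by omega), ← hg n le_rfl]; exact C.distg
  · rw [← hf 1 hn, ← hg 1 hn]; exact C.hne1
  · rw [← hf n le_rfl, ← hg n le_rfl]; exact C.hadj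

/-- The circular vertex function. -/
def circ (f g : ℕ → V) (n : ℕ) : ℕ → V := fun t =>
  if t % (2*n+1) ≤ n then f (t % (2*n+1)) else g (2*n+1 - t % (2*n+1))

theorem circ_per (f g : ℕ → V) (n t : ℕ) : circ f g n (t + (2*n+1)) = circ f g n t := by
  simp [circ, Nat.add_mod_right]

theorem circ_eq_f (f g : ℕ → V) (n t : ℕ) (ht : t ≤ n) : circ f g n t = f t := by
  have h : t % (2*n+1) = t := Nat.mod_eq_of_lt (by omega)
  simp [circ, h, ht]

theorem circ_eq_g (f g : ℕ → V) (n j : ℕ) (hj1 : 1 ≤ j) (hj : j ≤ n) :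
    circ f g n (2*n+1 - j) = g j := by
  have h : (2*n+1 - j) % (2*n+1) = 2*n+1 - j := Nat.mod_eq_of_lt (by omega)
  rw [circ, h, if_neg (by omega), show 2*n+1 - (2*n+1 - j) = j from by omega]

theorem rotAll (hG : IsGeodetic G) (C₀ : Cfg G n f g) (hn : 1 ≤ n) :
    ∀ k, Cfg G n (fun i => circ f g n (k + i)) (fun j => circ f g n (k + (2*n+1) - j)) := by
  intro k
  induction k with
  | zero =>
    apply C₀.congr hn
    · intro i hi
      show f i = circ f g n (0 + i)
      rw [Nat.zero_add, circ_eq_f f g n i hi]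
    · intro j hj
      show g j = circ f g n (0 + (2*n+1) - j)
      rw [Nat.zero_add]
      by_cases h0 : j = 0
      · subst h0
        rw [Nat.sub_zero, show (2*n+1) = 0 + (2*n+1) from by omega, circ_per,
          circ_eq_f f g n 0 (by omega)]
        exact C₀.hfg0.symm
      · rw [circ_eq_g f g n j (by omega) hj]
  | succ k ih =>
    have R := ih.rot hG hn
    apply R.congr hn
    · intro i hi
      show (if i < n then circ f g n (k + (i+1)) else circ f g n (k + (2*n+1) - n))
        = circ f g n (k + 1 + i)
      by_cases h1 : i < n
      · rw [if_pos h1]; exact congrArg (circ f g n) (by omega)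
      · rw [if_neg h1, show i = n from by omega]
        exact congrArg (circ f g n) (by omega)
    · intro j hj
      show (if j = 0 then circ f g n (k + 1) else circ f g n (k + (2*n+1) - (j-1)))
        = circ f g n (k + 1 + (2*n+1) - j)
      by_cases h0 : j = 0
      · subst h0
        rw [if_pos rfl, show k + 1 + (2*n+1) - 0 = (k+1) + (2*n+1) from by omega, circ_per]
      · rw [if_neg h0]
        exact congrArg (circ f g n) (by omega)

theorem dist_circ (hG : IsGeodetic G) (C₀ : Cfg G n f g) (hn : 1 ≤ n) (k i : ℕ)
    (hi1 : 1 ≤ i) (hi : i ≤ n) :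
    G.dist (circ f g n (k+i)) (circ f g n (k+n+1)) = n+1-i := by
  have h := (rotAll hG C₀ hn k).dtop hG hn i hi1 hi
  show G.dist ((fun i => circ f g n (k + i)) i) _ = n+1-i
  rw [h.symm]
  exact congrArg (G.dist _) (congrArg (circ f g n) (by omega)).symm

theorem dist_circ' (hG : IsGeodetic G) (C₀ : Cfg G n f g) (hn : 1 ≤ n) (a b : ℕ)
    (ha : a < 2*n+1) (hb : b < 2*n+1) (e : ℕ) (he : e = (b + (2*n+1) - a) % (2*n+1))
    (he1 : 1 ≤ e) (hen : e ≤ n) :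
    G.dist (circ f g n a) (circ f g n b) = e := by
  have h := dist_circ hG C₀ hn (b + (2*n+1) - (n+1)) (n+1-e) (by omega) (by omega)
  rw [show b + (2*n+1) - (n+1) + (n+1-e) = b + (2*n+1) - e from by omega,
      show b + (2*n+1) - (n+1) + n + 1 = b + (2*n+1) from by omega, circ_per] at h
  have hx : circ f g n (b + (2*n+1) - e) = circ f g n a := by
    rcases Nat.lt_or_ge (b + (2*n+1) - a) (2*n+1) with hc | hc
    · have he' : e = b + (2*n+1) - a := by rw [he, Nat.mod_eq_of_lt hc]
      rw [show b + (2*n+1) - e = a from by omega]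
    · have h2 : (b + (2*n+1) - a) % (2*n+1) = (b + (2*n+1) - a) - (2*n+1) := by
        rw [Nat.mod_eq_sub_mod hc, Nat.mod_eq_of_lt (by omega)]
      have he' : e = b + (2*n+1) - a - (2*n+1) := by rw [he, h2]
      rw [show b + (2*n+1) - e = a + (2*n+1) from by omega, circ_per]
  rw [hx] at h
  rw [h]
  omega

end StmtAux

theorem stmt0 {V : Type*} (G : SimpleGraph V) (hG : IsGeodetic G) (n : ℕ) (hn : 1 ≤ n)
    {u₀ uN uN' : V} (p : G.Walk u₀ uN) (q : G.Walk u₀ uN')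
    (hp : p.IsPath) (hq : q.IsPath) (hpl : p.length = n) (hql : q.length = n)
    (hpgeo : ∀ r : G.Walk u₀ uN, p.length ≤ r.length)
    (hqgeo : ∀ r : G.Walk u₀ uN', q.length ≤ r.length)
    (hne : p.getVert 1 ≠ q.getVert 1) (hadj : G.Adj uN uN') :
    IsIEC G (2 * n + 1)
      (fun i : ZMod (2 * n + 1) =>
        if i.val ≤ n then p.getVert i.val else q.getVert (2 * n + 1 - i.val)) := by
  classical
  haveI : NeZero (2*n+1) := ⟨by omega⟩
  haveI : Fact (1 < 2*n+1) := ⟨by omega⟩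
  have hdist : G.dist u₀ uN = n := by
    refine le_antisymm (hpl ▸ SimpleGraph.dist_le p) ?_
    obtain ⟨r, hr⟩ := SimpleGraph.Reachable.exists_walk_length_eq_dist (⟨p⟩ : G.Reachable u₀ uN)
    have := hpgeo r
    omega
  have hdist' : G.dist u₀ uN' = n := by
    refine le_antisymm (hql ▸ SimpleGraph.dist_le q) ?_
    obtain ⟨r, hr⟩ := SimpleGraph.Reachable.exists_walk_length_eq_dist (⟨q⟩ : G.Reachable u₀ uN')
    have := hqgeo r
    omega
  have hpn : p.getVert n = uN := by rw [← hpl]; exact p.getVert_length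
  have hqn : q.getVert n = uN' := by rw [← hql]; exact q.getVert_length
  have C₀ : StmtAux.Cfg G n (p.getVert) (q.getVert) := by
    refine ⟨?_, ?_, ?_, ?_, ?_, hne, ?_⟩
    · rw [p.getVert_zero, q.getVert_zero]
    · intro k hk; exact p.adj_getVert_succ (by omega)
    · intro k hk; exact q.adj_getVert_succ (by omega)
    · rw [p.getVert_zero, hpn]; exact hdist
    · rw [q.getVert_zero, hqn]; exact hdist'
    · rw [hpn, hqn]; exact hadj
  have hcc : ∀ i : ZMod (2*n+1),
      (if i.val ≤ n then p.getVert i.val else q.getVert (2*n+1 - i.val))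
        = StmtAux.circ (p.getVert) (q.getVert) n i.val := by
    intro i
    have hv : i.val % (2*n+1) = i.val := Nat.mod_eq_of_lt (ZMod.val_lt i)
    simp only [StmtAux.circ, hv]
  have vsub : ∀ s t : ZMod (2*n+1), (t - s).val = (t.val + (2*n+1) - s.val) % (2*n+1) := by
    intro s t
    have h1 : ((t.val + (2*n+1) - s.val : ℕ) : ZMod (2*n+1)) = t - s := by
      rw [Nat.cast_sub (by have := ZMod.val_lt s; omega : s.val ≤ t.val + (2*n+1)),
        Nat.cast_add]
      simp [ZMod.natCast_val, ZMod.cast_id, ZMod.natCast_self]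
    rw [← h1, ZMod.val_natCast]
  have harith : ∀ a b : ℕ, a < 2*n+1 → b < 2*n+1 → a ≠ b →
      (a + (2*n+1) - b) % (2*n+1) + (b + (2*n+1) - a) % (2*n+1) = 2*n+1 := by
    intro a b ha hb hab
    rcases Nat.lt_or_ge a b with h | h
    · rw [Nat.mod_eq_of_lt (show a + (2*n+1) - b < 2*n+1 by omega),
        Nat.mod_eq_sub_mod (show 2*n+1 ≤ b + (2*n+1) - a by omega),
        Nat.mod_eq_of_lt (show b + (2*n+1) - a - (2*n+1) < 2*n+1 by omega)]
      omega
    · rw [Nat.mod_eq_sub_mod (show 2*n+1 ≤ a + (2*n+1) - b by omega),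
        Nat.mod_eq_of_lt (show a + (2*n+1) - b - (2*n+1) < 2*n+1 by omega),
        Nat.mod_eq_of_lt (show b + (2*n+1) - a < 2*n+1 by omega)]
      omega
  have key : ∀ i j : ZMod (2*n+1),
      G.dist (if i.val ≤ n then p.getVert i.val else q.getVert (2*n+1 - i.val))
        (if j.val ≤ n then p.getVert j.val else q.getVert (2*n+1 - j.val))
        = min (j - i).val (i - j).val := by
    intro i j
    by_cases hij : i = j
    · subst hij
      simp [SimpleGraph.dist_self, sub_self, ZMod.val_zero]
    · have hδ1 : 1 ≤ (j - i).val := by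
        have h0 : j - i ≠ 0 := sub_ne_zero.mpr (Ne.symm hij)
        have := (ZMod.val_eq_zero (j - i)).not.mpr h0
        omega
      have he'1 : 1 ≤ (i - j).val := by
        have h0 : i - j ≠ 0 := sub_ne_zero.mpr hij
        have := (ZMod.val_eq_zero (i - j)).not.mpr h0
        omega
      have hAB : i.val ≠ j.val := by
        intro h
        have h2 : (j - i).val = 0 := by
          rw [vsub i j, h, show j.val + (2*n+1) - j.val = 2*n+1 from by omega, Nat.mod_self]
        omega
      have hv1 := vsub i j
      have hv2 := vsub j i
      have hs := harith i.val j.val (ZMod.val_lt i) (ZMod.val_lt j) hAB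
      have hsum : (j - i).val + (i - j).val = 2*n+1 := by rw [hv1, hv2]; omega
      rw [hcc i, hcc j]
      rcases le_or_gt ((j - i).val) n with hle | hlt
      · rw [StmtAux.dist_circ' hG C₀ hn i.val j.val (ZMod.val_lt i) (ZMod.val_lt j)
          ((j - i).val) hv1 hδ1 hle]
        omega
      · rw [SimpleGraph.dist_comm]
        rw [StmtAux.dist_circ' hG C₀ hn j.val i.val (ZMod.val_lt j) (ZMod.val_lt i)
          ((i - j).val) hv2 he'1 (by omega)]
        omega
  refine ⟨⟨by omega, ?_, ?_⟩, key⟩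
  · intro s t h
    simp only at h
    have hd := key s t
    rw [h] at hd
    simp only [SimpleGraph.dist_self] at hd
    have h0 : (t - s).val = 0 ∨ (s - t).val = 0 := by omega
    rcases h0 with h0 | h0
    · have h1 : t - s = 0 := (ZMod.val_eq_zero _).mp h0
      have := sub_eq_zero.mp h1
      exact this.symm
    · have h1 : s - t = 0 := (ZMod.val_eq_zero _).mp h0
      exact sub_eq_zero.mp h1
  · intro s
    have hd := key s (s+1)
    have h1 : (s + 1 - s) = (1 : ZMod (2*n+1)) := by ring
    have h2 : (s - (s+1)) = (-1 : ZMod (2*n+1)) := by ring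
    rw [h1, h2, ZMod.val_one] at hd
    have h3 : 1 ≤ (-1 : ZMod (2*n+1)).val := by
      have hne0 : (-1 : ZMod (2*n+1)) ≠ 0 := by
        simp only [ne_eq, neg_eq_zero]
        exact one_ne_zero
      have := (ZMod.val_eq_zero (-1 : ZMod (2*n+1))).not.mpr hne0
      omega
    rw [min_eq_left h3] at hd
    exact SimpleGraph.dist_eq_one_iff_adj.mp hd
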